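/- Let {Pₙ} be a complete family of mutually orthogonal projections on ℂ^N, and suppose H = ∑ₙ εₙ Pₙ with εₙ real, and Lₖ = ∑ₙ λ_{k,n} Pₙ with λ_{k,n} complex, for k = 1,…,d. Then for any N×N matrix X and any indices n, m, the Lindblad generator 𝓛(X) = (1/2)∑ₖ([Lₖ*, X]Lₖ + Lₖ*[X, Lₖ]) − i[X, H] satisfies 𝓛(Pₙ X Pₘ) = z_{nm} Pₙ X Pₘ, where z_{nm} = ∑ₖ(λ̄_{k,n} λ_{k,m} − |λ_{k,n}|²/2 − |λ_{k,m}|²/2) + i(εₙ − εₘ). -/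

import Mathlib

open Matrix

/-- For a Lindblad generator whose Hamiltonian and coupling operators are
simultaneously diagonal with respect to a complete family of mutually orthogonal
projections, the operators `Pₙ X Pₘ` are eigen-operators with eigenvalue `z_{nm}`. -/
theorem stmt_6 (N d M : ℕ) (P : Fin M → Matrix (Fin N) (Fin N) ℂ)
    (hPherm : ∀ n, (P n)ᴴ = P n)
    (hPorth : ∀ n m, P n * P m = if n = m then P n else 0)
    (hPcompl : ∑ n, P n = 1)
    (ε : Fin M → ℝ) (lam : Fin d → Fin M → ℂ)
    (H : Matrix (Fin N) (Fin N) ℂ) (hHdef : H = ∑ n, (ε n : ℂ) • P n)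
    (L : Fin d → Matrix (Fin N) (Fin N) ℂ)
    (hLdef : ∀ k, L k = ∑ n, lam k n • P n)
    (𝓛 : Matrix (Fin N) (Fin N) ℂ → Matrix (Fin N) (Fin N) ℂ)
    (h𝓛 : ∀ Y, 𝓛 Y = (1 / 2 : ℂ) • ∑ k, (((L k)ᴴ * Y - Y * (L k)ᴴ) * L k
          + (L k)ᴴ * (Y * L k - L k * Y))
        - Complex.I • (Y * H - H * Y)) :
    ∀ (X : Matrix (Fin N) (Fin N) ℂ) (n m : Fin M),
      𝓛 (P n * X * P m)
        = ((∑ k, ((starRingEnd ℂ) (lam k n) * lam k m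
              - ((‖lam k n‖ : ℝ) : ℂ) ^ 2 / 2
              - ((‖lam k m‖ : ℝ) : ℂ) ^ 2 / 2))
            + Complex.I * ((ε n : ℂ) - (ε m : ℂ))) • (P n * X * P m) := by
  intro X n m
  have hmulP : ∀ (c : Fin M → ℂ) (j : Fin M), (∑ i, c i • P i) * P j = c j • P j := by
    intro c j
    rw [Finset.sum_mul]
    simp [smul_mul_assoc, hPorth, smul_ite, Finset.sum_ite_eq']
  have hPmul : ∀ (c : Fin M → ℂ) (j : Fin M), P j * (∑ i, c i • P i) = c j • P j := by
    intro c j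
    rw [Finset.mul_sum]
    simp [mul_smul_comm, hPorth, smul_ite, Finset.sum_ite_eq]
  set Q := P n * X * P m with hQ
  have hLH : ∀ k, (L k)ᴴ = ∑ i, (starRingEnd ℂ) (lam k i) • P i := by
    intro k
    rw [hLdef k, conjTranspose_sum]
    simp [conjTranspose_smul, hPherm]
  have hleft : ∀ (c : Fin M → ℂ), (∑ i, c i • P i) * Q = c n • Q := by
    intro c
    rw [hQ, mul_assoc (P n) X (P m), ← mul_assoc _ (P n), hmulP, smul_mul_assoc]
  have hright : ∀ (c : Fin M → ℂ), Q * (∑ i, c i • P i) = c m • Q := by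
    intro c
    rw [hQ, mul_assoc, hPmul, mul_smul_comm]
  have h1 : ∀ k, (L k)ᴴ * Q = (starRingEnd ℂ) (lam k n) • Q := fun k => by
    rw [hLH k]; exact hleft _
  have h2 : ∀ k, Q * (L k)ᴴ = (starRingEnd ℂ) (lam k m) • Q := fun k => by
    rw [hLH k]; exact hright _
  have h3 : ∀ k, L k * Q = lam k n • Q := fun k => by rw [hLdef k]; exact hleft _
  have h4 : ∀ k, Q * L k = lam k m • Q := fun k => by rw [hLdef k]; exact hright _
  have hH1 : H * Q = (ε n : ℂ) • Q := by rw [hHdef]; exact hleft _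
  have hH2 : Q * H = (ε m : ℂ) • Q := by rw [hHdef]; exact hright _
  have habs : ∀ z : ℂ, (starRingEnd ℂ) z * z = ((‖z‖ : ℝ) : ℂ) ^ 2 := by
    intro z
    rw [mul_comm, Complex.mul_conj, Complex.normSq_eq_norm_sq]
    push_cast; ring
  rw [h𝓛 Q, hH1, hH2]
  have hterm : ∀ k, (((L k)ᴴ * Q - Q * (L k)ᴴ) * L k + (L k)ᴴ * (Q * L k - L k * Q))
      = ((starRingEnd ℂ) (lam k n) * lam k m - (starRingEnd ℂ) (lam k m) * lam k m
         + ((starRingEnd ℂ) (lam k n) * lam k m - (starRingEnd ℂ) (lam k n) * lam k n)) • Q := by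
    intro k
    simp only [h1, h2, h3, h4, ← sub_smul, smul_mul_assoc, mul_smul_comm, smul_smul,
      ← add_smul]
    congr 1
    ring
  simp only [hterm]
  rw [← Finset.sum_smul, smul_smul, ← sub_smul, smul_smul, ← sub_smul]
  congr 1
  have hsum : ∑ k, ((starRingEnd ℂ) (lam k n) * lam k m
        - ((‖lam k n‖ : ℝ) : ℂ) ^ 2 / 2 - ((‖lam k m‖ : ℝ) : ℂ) ^ 2 / 2)
      = ∑ k, (1 / 2 : ℂ) * ((starRingEnd ℂ) (lam k n) * lam k m
          - (starRingEnd ℂ) (lam k m) * lam k m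
          + ((starRingEnd ℂ) (lam k n) * lam k m - (starRingEnd ℂ) (lam k n) * lam k n)) :=
    Finset.sum_congr rfl fun k _ => by rw [← habs, ← habs]; ring
  rw [hsum, Finset.mul_sum]
  ring
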